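/- arXiv:1204.5399 — 2 statements merged into one kernel-verified Lean document; each statement's English description precedes it below -/
import Mathlib

section
/- Fix n experts, z ≥ 2 outcomes, and ε > 0. Let f_1, …, f_n ∈ ℝ^z be probability vectors, and define the weights p_{i,j} = (ε + D(f_i, f_j))⁻¹ / Σ_{m=1}^{n} (ε + D(f_i, f_m))⁻¹, where D(f, g) = sqrt( (Σ_{x=1}^{z} (f_x − g_x)²) / z ). Let R be the quadratic scoring rule R(f, e) = 2·f_e − Σ_{x=1}^{z} f_x². Then for all experts i, j, k: p_{i,j} < p_{i,k} if and only if E_{f_i}[R(f_k)] > E_{f_i}[R(f_j)], where E_f[R(g)] = Σ_{e=1}^{z} f_e · R(g, e). That is, the quadratic scoring rule is effective with respect to the set of weights assigned according to the distance-based formula. -/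
open Finset

/-- A probability vector: nonnegative entries summing to 1. -/
def ProbVec {z : ℕ} (f : Fin z → ℝ) : Prop :=
  (∀ k, 0 ≤ f k) ∧ ∑ k, f k = 1

/-- Root-mean-square deviation between two opinions. -/
noncomputable def D {z : ℕ} (f g : Fin z → ℝ) : ℝ :=
  Real.sqrt ((∑ k, (f k - g k) ^ 2) / z)

/-- The weight that expert `i` assigns to expert `j`, given opinions `f`:
`p_{i,j} = (ε + D(f_i, f_j))⁻¹ / Σ_m (ε + D(f_i, f_m))⁻¹`. -/
noncomputable def weight {n z : ℕ} (ε : ℝ) (f : Fin n → Fin z → ℝ) (i j : Fin n) : ℝ :=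
  (ε + D (f i) (f j))⁻¹ / ∑ m, (ε + D (f i) (f m))⁻¹

/-- The quadratic scoring rule: `R(f, e) = 2 f_e − Σ_k f_k²`. -/
noncomputable def QSR {z : ℕ} (f : Fin z → ℝ) (e : Fin z) : ℝ :=
  2 * f e - ∑ k, f k ^ 2

/-- The `f`-expected score of reporting `g` under the quadratic scoring rule. -/
noncomputable def expScore {z : ℕ} (f g : Fin z → ℝ) : ℝ :=
  ∑ e, f e * QSR g e

/-- The quadratic scoring rule is effective with respect to the
distance-based weights. -/
theorem quadratic_effective_wrt_weights {n z : ℕ} (hz : 2 ≤ z)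
    {ε : ℝ} (hε : 0 < ε) (f : Fin n → Fin z → ℝ) (hf : ∀ i, ProbVec (f i)) :
    ∀ i j k : Fin n,
      weight ε f i j < weight ε f i k ↔ expScore (f i) (f k) > expScore (f i) (f j) := by
  intro i j k
  have hzpos : (0 : ℝ) < z := by positivity
  have hDnn : ∀ m : Fin n, 0 ≤ D (f i) (f m) := fun m => Real.sqrt_nonneg _
  -- expScore identity
  have key : ∀ g : Fin z → ℝ,
      expScore (f i) g = (∑ e, (f i e) ^ 2) - ∑ e, (f i e - g e) ^ 2 := by
    intro g
    have hsum := (hf i).2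
    simp only [expScore, QSR]
    have h1 : ∑ e, f i e * (2 * g e - ∑ x, g x ^ 2)
        = 2 * (∑ e, f i e * g e) - (∑ x, g x ^ 2) * (∑ e, f i e) := by
      rw [Finset.mul_sum, Finset.mul_sum, ← Finset.sum_sub_distrib]
      congr 1; ext e; ring
    have h2 : ∑ e, (f i e - g e) ^ 2
        = (∑ e, (f i e) ^ 2) - 2 * (∑ e, f i e * g e) + ∑ e, g e ^ 2 := by
      rw [Finset.mul_sum, ← Finset.sum_sub_distrib, ← Finset.sum_add_distrib]
      congr 1; ext e; ring
    rw [h1, h2, hsum]; ring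
  have hexp : expScore (f i) (f k) > expScore (f i) (f j) ↔
      (∑ e, (f i e - f k e) ^ 2) < ∑ e, (f i e - f j e) ^ 2 := by
    rw [key, key]; constructor <;> intro h <;> linarith
  -- D comparison
  have hD : D (f i) (f k) < D (f i) (f j) ↔
      (∑ e, (f i e - f k e) ^ 2) < ∑ e, (f i e - f j e) ^ 2 := by
    unfold D
    rw [Real.sqrt_lt_sqrt_iff (by positivity)]
    exact div_lt_div_iff_of_pos_right hzpos
  -- weight comparison
  have hden : 0 < ∑ m, (ε + D (f i) (f m))⁻¹ := by
    apply Finset.sum_pos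
    · intro m _
      have := hDnn m
      positivity
    · exact ⟨i, Finset.mem_univ i⟩
  have hw : weight ε f i j < weight ε f i k ↔
      (ε + D (f i) (f j))⁻¹ < (ε + D (f i) (f k))⁻¹ := by
    unfold weight
    exact div_lt_div_iff_of_pos_right hden
  have hinv : (ε + D (f i) (f j))⁻¹ < (ε + D (f i) (f k))⁻¹ ↔
      D (f i) (f k) < D (f i) (f j) := by
    rw [inv_lt_inv₀ (by have := hDnn j; positivity) (by have := hDnn k; positivity)]
    constructor <;> intro h <;> linarith
  rw [hw, hinv, hD, hexp]
end

section
/- Fix n experts, z ≥ 2 outcomes, ε > 0, x > 0, and y ∈ ℝ. Let f_1, …, f_n ∈ ℝ^z be probability vectors, and define the weights p_{i,j} = (ε + D(f_i, f_j))⁻¹ / Σ_{m=1}^{n} (ε + D(f_i, f_m))⁻¹, where D(f, g) = sqrt( (Σ_{x'=1}^{z} (f_{x'} − g_{x'})²) / z ). Let R be the quadratic scoring rule R(f, e) = 2·f_e − Σ_{x'=1}^{z} f_{x'}², and let S be the positive affine transformation S(f, e) = x·R(f, e) + y. Then for all experts i, j, k: p_{i,j} < p_{i,k} if and only if E_{f_i}[S(f_k)]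 > E_{f_i}[S(f_j)], where E_f[S(g)] = Σ_{e=1}^{z} f_e · S(g, e). That is, any positive affine transformation of the quadratic scoring rule is effective with respect to the set of weights assigned according to the distance-based formula. -/
open Finset

/-- Any positive affine transformation `S(f, e) = x · R(f, e) + y` of the quadratic
scoring rule is effective with respect to the distance-based weights. -/
theorem affine_quadratic_effective_wrt_weights {n z : ℕ} (hz : 2 ≤ z)
    {ε : ℝ} (hε : 0 < ε) {x : ℝ} (hx : 0 < x) (y : ℝ)
    (f : Fin n → Fin z → ℝ) (hf : ∀ i, ProbVec (f i)) :
    ∀ i j k : Fin n,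
      weight ε f i j < weight ε f i k ↔
        (∑ e, f i e * (x * QSR (f k) e + y)) > (∑ e, f i e * (x * QSR (f j) e + y)) := by
  intro i j k
  have hz0 : (0:ℝ) < (z:ℝ) := by
    have : (2:ℝ) ≤ (z:ℝ) := by exact_mod_cast hz
    linarith
  -- expected score formula
  have hexp : ∀ g : Fin z → ℝ, (∑ e, f i e * (x * QSR g e + y))
      = x * ((∑ e, f i e ^ 2) - ∑ e, (f i e - g e) ^ 2) + y := by
    intro g
    have h1 : ∑ e, f i e = 1 := (hf i).2
    have e1 : ∑ e, f i e * (x * QSR g e + y)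
        = ∑ e, (2 * x * (f i e * g e) + f i e * (y - x * ∑ m, g m ^ 2)) := by
      refine Finset.sum_congr rfl fun e _ => ?_
      simp only [QSR]; ring
    have e2 : ∑ e, (f i e - g e) ^ 2
        = (∑ e, f i e ^ 2) - 2 * (∑ e, f i e * g e) + ∑ e, g e ^ 2 := by
      rw [Finset.mul_sum, ← Finset.sum_sub_distrib, ← Finset.sum_add_distrib]
      exact Finset.sum_congr rfl fun e _ => by ring
    rw [e1, Finset.sum_add_distrib, ← Finset.mul_sum, ← Finset.sum_mul, h1, e2]
    ring
  rw [hexp (f j), hexp (f k)]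
  -- weights comparison reduces to distance comparison
  have hDnn : ∀ m, 0 ≤ D (f i) (f m) := fun m => Real.sqrt_nonneg _
  have hpos : ∀ m, 0 < ε + D (f i) (f m) := fun m => by
    have := hDnn m; linarith
  have hT : 0 < ∑ m, (ε + D (f i) (f m))⁻¹ :=
    Finset.sum_pos (fun m _ => inv_pos.2 (hpos m)) ⟨i, Finset.mem_univ i⟩
  have hw : weight ε f i j < weight ε f i k ↔
      (∑ e, (f i e - f k e) ^ 2) < ∑ e, (f i e - f j e) ^ 2 := by
    unfold weight
    rw [div_lt_div_iff_of_pos_right hT]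
    rw [inv_lt_inv₀ (hpos j) (hpos k)]
    constructor
    · intro h
      have h' : D (f i) (f k) < D (f i) (f j) := by linarith
      unfold D at h'
      have := (Real.sqrt_lt_sqrt_iff (by positivity)).mp h'
      rw [div_lt_div_iff_of_pos_right hz0] at this
      exact this
    · intro h
      have h' : (∑ e, (f i e - f k e) ^ 2) / z < (∑ e, (f i e - f j e) ^ 2) / z := by
        rw [div_lt_div_iff_of_pos_right hz0]; exact h
      have := Real.sqrt_lt_sqrt (by positivity) h'
      unfold D
      linarith
  rw [hw]
  constructor
  · intro h; nlinarith
  · intro h; nlinarith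
end
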